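/- With notation as in the Gel'fand–Dickey setting: let L = ∂^{n+1} − Σ_{j=0}^{n-1} u_j ∂^j, let v = (v_0,…,v_{n-1}) be a covector, V = φ(v) the unique matrix lifting determined by V^j_n = v_j (j = 0,…,n−1), the recursion relations (5.9), and the trace-zero condition, and set X := −Σ_{j=0}^{n} ∂^{-j-1} V^j_n and E := −Σ_{j=0}^{n} V^0_j ∂^j. Then E = (XL)_+, the purely differential part of XL. -/

import Mathlib

/-!  A self-contained model of the algebra of pseudodifferential operators on the
circle (or over an abstract differential ring `(R, d)`).

A pseudodifferential operator `A = ∑_{i ≤ N} a_i ∂^i` is encoded by the sequence of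
its coefficients `A : ℤ → R` (`A i = a_i`, vanishing for large `i`).  The product is
the standard one, determined by the generalized Leibniz rule
`∂^i ∘ b = ∑_{k ≥ 0} C(i,k) b^{(k)} ∂^{i-k}` with generalized binomial coefficients
`C(i,k) = Ring.choose i k`. -/

noncomputable section

namespace GD

variable {R : Type} [CommRing R]

/-- Pseudodifferential operators encoded by coefficient sequences:
`A : ℤ → R` stands for `∑ i, (A i) ∂^i`. -/
abbrev PDO (R : Type) := ℤ → R

/-- The product of pseudodifferential operators, with respect to the derivation `d`
of the coefficient ring.  (The `finsum` is a finite sum whenever the two factors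
have bounded order, which is the case throughout.) -/
def pmul (d : R → R) (A B : PDO R) : PDO R :=
  fun m => ∑ᶠ p : ℤ × ℕ,
    (Ring.choose p.1 p.2 : ℤ) • (A p.1 * d^[p.2] (B (m - p.1 + (p.2 : ℤ))))

/-- The single-term operator `a ∂^j`. -/
def term (a : R) (j : ℤ) : PDO R := fun m => if m = j then a else 0

/-- The identity operator `1 = ∂^0`. -/
def one : PDO R := term (1 : R) 0

/-- The purely differential part `A₊` of a pseudodifferential operator
(the part with nonnegative powers of `∂`); `A₋ = A - A₊`. -/
def plus (A : PDO R) : PDO R := fun m => if 0 ≤ m then A m else 0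

/-- `d` is a derivation of `R`. -/
def IsDeriv (d : R → R) : Prop :=
  (∀ a b, d (a + b) = d a + d b) ∧ ∀ a b, d (a * b) = d a * b + a * d b

end GD

namespace GDAux
open Finset GD

variable {R : Type} [CommRing R] {d : R → R}

abbrev IsDeriv (d : R → R) : Prop := GD.IsDeriv d

lemma isDeriv_add (hd : IsDeriv d) : ∀ a b, d (a + b) = d a + d b :=
  (show (∀ a b, d (a + b) = d a + d b) ∧ (∀ a b, d (a * b) = d a * b + a * d b) from hd).1

lemma isDeriv_mul (hd : IsDeriv d) : ∀ a b, d (a * b) = d a * b + a * d b :=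
  (show (∀ a b, d (a + b) = d a + d b) ∧ (∀ a b, d (a * b) = d a * b + a * d b) from hd).2

lemma d_zero (hd : IsDeriv d) : d 0 = 0 := by
  have h := isDeriv_add hd 0 0; rw [add_zero] at h; exact (left_eq_add.mp h)

lemma d_one (hd : IsDeriv d) : d 1 = 0 := by
  have h := isDeriv_mul hd 1 1; simp only [mul_one, one_mul] at h; exact (left_eq_add.mp h)

lemma d_neg (hd : IsDeriv d) (a : R) : d (-a) = - d a := by
  have h := isDeriv_add hd a (-a); rw [add_neg_cancel, d_zero hd] at h
  exact eq_neg_of_add_eq_zero_right h.symm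

lemma d_sub (hd : IsDeriv d) (a b : R) : d (a - b) = d a - d b := by
  rw [sub_eq_add_neg, isDeriv_add hd _ _, d_neg hd, sub_eq_add_neg]

lemma d_nsmul (hd : IsDeriv d) (k : ℕ) (a : R) : d (k • a) = k • d a := by
  induction k with
  | zero => simpa using d_zero hd
  | succ k ih => rw [succ_nsmul, succ_nsmul, isDeriv_add hd _ _, ih]

lemma d_zsmul (hd : IsDeriv d) (z : ℤ) (a : R) : d (z • a) = z • d a := by
  cases z with
  | ofNat k => simpa using d_nsmul hd k a
  | negSucc k =>
      rw [Int.negSucc_eq, neg_smul, neg_smul, d_neg hd]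
      norm_cast
      rw [d_nsmul hd]

lemma d_sum (hd : IsDeriv d) {ι : Type*} (s : Finset ι) (f : ι → R) :
    d (∑ i ∈ s, f i) = ∑ i ∈ s, d (f i) := by
  classical
  induction s using Finset.induction_on with
  | empty => simpa using d_zero hd
  | insert _ _ hx ih => rw [Finset.sum_insert hx, isDeriv_add hd _ _, ih, Finset.sum_insert hx]

lemma iter_d_zero (hd : IsDeriv d) (k : ℕ) : d^[k] (0:R) = 0 := by
  induction k with
  | zero => rfl
  | succ k ih => rw [Function.iterate_succ_apply, d_zero hd, ih]

lemma iter_d_add (hd : IsDeriv d) (k : ℕ) (a b : R) :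
    d^[k] (a + b) = d^[k] a + d^[k] b := by
  induction k generalizing a b with
  | zero => rfl
  | succ k ih => rw [Function.iterate_succ_apply, isDeriv_add hd _ _, ih,
      Function.iterate_succ_apply, Function.iterate_succ_apply]

lemma iter_d_zsmul (hd : IsDeriv d) (k : ℕ) (z : ℤ) (a : R) :
    d^[k] (z • a) = z • d^[k] a := by
  induction k generalizing a with
  | zero => rfl
  | succ k ih => rw [Function.iterate_succ_apply, d_zsmul hd, ih,
      Function.iterate_succ_apply]

lemma iter_d_sub (hd : IsDeriv d) (k : ℕ) (a b : R) :
    d^[k] (a - b) = d^[k] a - d^[k] b := by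
  induction k generalizing a b with
  | zero => rfl
  | succ k ih => rw [Function.iterate_succ_apply, d_sub hd, ih,
      Function.iterate_succ_apply, Function.iterate_succ_apply]

lemma iter_d_sum (hd : IsDeriv d) (k : ℕ) {ι : Type*} (s : Finset ι) (f : ι → R) :
    d^[k] (∑ i ∈ s, f i) = ∑ i ∈ s, d^[k] (f i) := by
  classical
  induction s using Finset.induction_on with
  | empty => simpa using iter_d_zero hd k
  | insert _ _ hx ih => rw [Finset.sum_insert hx, iter_d_add hd, ih, Finset.sum_insert hx]

lemma iter_d_one (hd : IsDeriv d) (k : ℕ) (hk : k ≠ 0) : d^[k] (1:R) = 0 := by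
  obtain ⟨k, rfl⟩ := Nat.exists_eq_succ_of_ne_zero hk
  rw [Function.iterate_succ_apply, d_one hd, iter_d_zero hd]

lemma leibniz (hd : IsDeriv d) (K : ℕ) (x y : R) :
    d^[K] (x * y) = ∑ r ∈ range (K+1), (K.choose r) • (d^[r] x * d^[K - r] y) := by
  induction K with
  | zero => simp
  | succ K ih =>
      rw [Function.iterate_succ_apply', ih, d_sum hd]
      have hterm : ∀ r, d (K.choose r • (d^[r] x * d^[K-r] y)) =
          K.choose r • (d^[r+1] x * d^[K-r] y) + K.choose r • (d^[r] x * d^[K-r+1] y) := by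
        intro r
        rw [← Nat.cast_smul_eq_nsmul ℤ, d_zsmul hd, isDeriv_mul hd _ _,
          show d (d^[r] x) = d^[r+1] x from (Function.iterate_succ_apply' d r x).symm,
          show d (d^[K-r] y) = d^[K-r+1] y from (Function.iterate_succ_apply' d (K-r) y).symm,
          smul_add, Nat.cast_smul_eq_nsmul, Nat.cast_smul_eq_nsmul]
      rw [Finset.sum_congr rfl (fun r _ => hterm r), Finset.sum_add_distrib]
      -- first sum: ∑_{r≤K} C(K,r) • (d^[r+1] x * d^[K-r] y)
      -- second sum: ∑_{r≤K} C(K,r) • (d^[r] x * d^[K+1-r] y)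
      have h2 : ∀ r ∈ range (K+1), (K.choose r) • (d^[r] x * d^[K-r+1] y)
          = (K.choose r) • (d^[r] x * d^[K+1-r] y) := by
        intro r hr; rw [Finset.mem_range] at hr
        have h : K - r + 1 = K + 1 - r := by omega
        rw [h]
      rw [Finset.sum_congr rfl h2]
      -- target: ∑_{r ≤ K+1} C(K+1,r) • (d^[r] x * d^[K+1-r] y)
      rw [Finset.sum_range_succ' (fun r => ((K+1).choose r) • (d^[r] x * d^[K+1-r] y)) (K+1)]
      rw [Finset.sum_range_succ (fun r => (K.choose r) • (d^[r+1] x * d^[K-r] y)) K]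
      rw [Finset.sum_range_succ' (fun r => (K.choose r) • (d^[r] x * d^[K+1-r] y)) K]
      rw [Finset.sum_range_succ (fun k => ((K+1).choose (k+1)) • (d^[k+1] x * d^[K+1-(k+1)] y)) K]
      have hsum : ∀ k ∈ range K, (K.choose k) • (d^[k+1] x * d^[K-k] y)
          + (K.choose (k+1)) • (d^[k+1] x * d^[K+1-(k+1)] y)
          = ((K+1).choose (k+1)) • (d^[k+1] x * d^[K+1-(k+1)] y) := by
        intro k hk; rw [Finset.mem_range] at hk
        have h : K - k = K + 1 - (k+1) := by omega
        rw [h, ← add_nsmul, Nat.choose_succ_succ']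
      have hcomb : (∑ k ∈ range K, (K.choose k) • (d^[k+1] x * d^[K-k] y))
          + ∑ k ∈ range K, (K.choose (k+1)) • (d^[k+1] x * d^[K+1-(k+1)] y)
          = ∑ k ∈ range K, ((K+1).choose (k+1)) • (d^[k+1] x * d^[K+1-(k+1)] y) := by
        rw [← Finset.sum_add_distrib]; exact Finset.sum_congr rfl hsum
      have he1 : (K.choose K) • (d^[K+1] x * d^[K-K] y)
          = ((K+1).choose (K+1)) • (d^[K+1] x * d^[K+1-(K+1)] y) := by
        simp [Nat.choose_self]
      have he2 : (K.choose 0) • (d^[0] x * d^[K+1-0] y)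
          = ((K+1).choose 0) • (d^[0] x * d^[K+1-0] y) := by
        simp
      rw [he1, he2, ← hcomb]
      ring

lemma pascal_neg (z : ℤ) (e : ℕ) :
    Ring.choose z (e+1) = Ring.choose (z-1) e + Ring.choose (z-1) (e+1) := by
  have h := Ring.choose_succ_succ (z - 1) e
  rw [sub_add_cancel] at h
  exact h

lemma choose_neg_one_succ (e : ℕ) :
    Ring.choose (-1 : ℤ) (e+1) = - Ring.choose (-1:ℤ) e := by
  have h := pascal_neg (0:ℤ) e
  rw [Ring.choose_zero_succ, zero_sub] at h
  linarith

lemma tri (j s K : ℕ) (hs : s ≤ K) :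
    (Ring.choose (-(j:ℤ)-1) s) * (Ring.choose (-((j+s:ℕ):ℤ)-1) (K-s))
      = (K.choose s : ℤ) * Ring.choose (-(j:ℤ)-1) K := by
  have h := Ring.choose_smul_choose (-(j:ℤ)-1) (n := K) (k := s) hs
  rw [nsmul_eq_mul] at h
  rw [show (-((j+s:ℕ):ℤ)-1) = -(j:ℤ)-1-(s:ℤ) by push_cast; ring]
  exact h.symm


lemma claim1 (a : ℕ) (t : ℕ → R) :
    ∑ j ∈ range (a+1+1), (Ring.choose (-(j:ℤ)-1) (a+1-j)) • t j
      = (∑ j ∈ range (a+1), (Ring.choose (-(j:ℤ)-1) (a-j)) • t (j+1))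
        - ∑ j ∈ range (a+1), (Ring.choose (-(j:ℤ)-1) (a-j)) • t j := by
  rw [Finset.sum_range_succ' (fun j => (Ring.choose (-(j:ℤ)-1) (a+1-j)) • t j) (a+1)]
  rw [Finset.sum_range_succ (fun j => (Ring.choose (-(j:ℤ)-1) (a-j)) • t (j+1)) a]
  rw [Finset.sum_range_succ' (fun j => (Ring.choose (-(j:ℤ)-1) (a-j)) • t j) a]
  rw [Finset.sum_range_succ (fun j => (Ring.choose (-((j+1:ℕ):ℤ)-1) (a+1-(j+1))) • t (j+1)) a]
  have hmid : ∀ x ∈ range a, Ring.choose (-((x+1:ℕ):ℤ)-1) (a+1-(x+1))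
      = Ring.choose (-(x:ℤ)-1) (a-x) - Ring.choose (-((x+1:ℕ):ℤ)-1) (a-(x+1)) := by
    intro x hx; rw [Finset.mem_range] at hx
    have h := pascal_neg (-(x:ℤ)-1) (a-x-1)
    rw [show (a-x-1)+1 = a-x by omega] at h
    have c1 : -((x+1:ℕ):ℤ)-1 = -(x:ℤ)-1-1 := by push_cast; ring
    rw [c1, show a+1-(x+1) = a-x by omega, show a-(x+1) = a-x-1 by omega]
    linarith [h]
  have hs : ∑ x ∈ range a, Ring.choose (-((x+1:ℕ):ℤ)-1) (a+1-(x+1)) • t (x+1)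
      = (∑ x ∈ range a, Ring.choose (-(x:ℤ)-1) (a-x) • t (x+1))
        - ∑ x ∈ range a, Ring.choose (-((x+1:ℕ):ℤ)-1) (a-(x+1)) • t (x+1) := by
    rw [← Finset.sum_sub_distrib]
    exact Finset.sum_congr rfl fun x hx => by rw [hmid x hx, sub_smul]
  have hA : Ring.choose (-((a+1:ℕ):ℤ)-1) (a+1-(a+1)) • t (a+1)
      = Ring.choose (-(a:ℤ)-1) (a-a) • t (a+1) := by
    rw [Nat.sub_self, Nat.sub_self, Ring.choose_zero_right, Ring.choose_zero_right]
  have h0 : Ring.choose (-((0:ℕ):ℤ)-1) (a+1-0) • t 0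
      = - (Ring.choose (-((0:ℕ):ℤ)-1) (a-0) • t 0) := by
    norm_num [choose_neg_one_succ, neg_smul]
  rw [hs, hA, h0]
  ring


lemma pascal_neg' (j e : ℕ) :
    Ring.choose (-((j+1:ℕ):ℤ)-1) (e+1)
      = Ring.choose (-(j:ℤ)-1) (e+1) - Ring.choose (-((j+1:ℕ):ℤ)-1) e := by
  have h := pascal_neg (-(j:ℤ)-1) e
  have c1 : -((j+1:ℕ):ℤ)-1 = -(j:ℤ)-1-1 := by push_cast; ring
  rw [c1]
  linarith [h]

lemma claim2row (b j : ℕ) (hj : j ≤ b) (H : ℕ → R) :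
    ∑ e ∈ range (b-j), (Ring.choose (-((j+1:ℕ):ℤ)-1) e) • H e
      = (∑ e ∈ range (b-j), (Ring.choose (-(j:ℤ)-1) e) • H e)
        - ∑ e ∈ range (b-(j+1)), (Ring.choose (-((j+1:ℕ):ℤ)-1) e) • H (e+1) := by
  rcases Nat.eq_zero_or_pos (b - j) with hN | hN
  · rw [hN, show b - (j+1) = 0 by omega]
    simp
  · obtain ⟨M, hM⟩ : ∃ M, b - j = M + 1 := ⟨b - j - 1, by omega⟩
    rw [hM, show b - (j+1) = M by omega]
    rw [Finset.sum_range_succ' (fun e => (Ring.choose (-((j+1:ℕ):ℤ)-1) e) • H e) M]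
    rw [Finset.sum_range_succ' (fun e => (Ring.choose (-(j:ℤ)-1) e) • H e) M]
    have hmid : ∀ e ∈ range M, (Ring.choose (-((j+1:ℕ):ℤ)-1) (e+1)) • H (e+1)
        = (Ring.choose (-(j:ℤ)-1) (e+1)) • H (e+1)
          - (Ring.choose (-((j+1:ℕ):ℤ)-1) e) • H (e+1) := by
      intro e _
      rw [pascal_neg' j e, sub_smul]
    rw [Finset.sum_congr rfl hmid, Finset.sum_sub_distrib]
    rw [Ring.choose_zero_right, Ring.choose_zero_right]
    ring

lemma claim2 (a : ℕ) (G : ℕ → ℕ → R) :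
    ∑ j ∈ range (a+1), ∑ e ∈ range (a-j), (Ring.choose (-(j:ℤ)-1) e) • G j e
      = (∑ j ∈ range a, ∑ e ∈ range (a-1-j), (Ring.choose (-(j:ℤ)-1) e) • G (j+1) e)
        - (∑ j ∈ range a, ∑ e ∈ range (a-1-j), (Ring.choose (-(j:ℤ)-1) e) • G j (e+1))
        + (if 0 < a then G 0 0 else 0) := by
  rcases Nat.eq_zero_or_pos a with ha | ha
  · subst ha; simp
  · obtain ⟨b, rfl⟩ : ∃ b, a = b + 1 := ⟨a - 1, by omega⟩
    rw [if_pos ha]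
    -- peel j = 0 on LHS
    rw [Finset.sum_range_succ'
      (fun j => ∑ e ∈ range (b+1-j), (Ring.choose (-(j:ℤ)-1) e) • G j e) (b+1)]
    -- peel j = 0 on S2
    rw [Finset.sum_range_succ'
      (fun j => ∑ e ∈ range (b+1-1-j), (Ring.choose (-(j:ℤ)-1) e) • G j (e+1)) b]
    -- inner 0 of LHS : peel e = 0
    rw [show b+1-0 = b+1 by omega]
    rw [Finset.sum_range_succ' (fun e => (Ring.choose (-((0:ℕ):ℤ)-1) e) • G 0 e) b]
    -- rows
    have hrow : ∀ j ∈ range (b+1),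
        ∑ e ∈ range (b+1-(j+1)), (Ring.choose (-((j+1:ℕ):ℤ)-1) e) • G (j+1) e
          = (∑ e ∈ range (b+1-1-j), (Ring.choose (-(j:ℤ)-1) e) • G (j+1) e)
            - ∑ e ∈ range (b-(j+1)), (Ring.choose (-((j+1:ℕ):ℤ)-1) e) • G (j+1) (e+1) := by
      intro j hj; rw [Finset.mem_range] at hj
      rw [show b+1-(j+1) = b-j by omega, show b+1-1-j = b-j by omega]
      exact claim2row b j (by omega) (fun e => G (j+1) e)
    rw [Finset.sum_congr rfl hrow, Finset.sum_sub_distrib]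
    -- extend the subtracted rows sum from range (b+1) back to range b
    have hext : ∑ j ∈ range (b+1), ∑ e ∈ range (b-(j+1)), (Ring.choose (-((j+1:ℕ):ℤ)-1) e) • G (j+1) (e+1)
        = ∑ j ∈ range b, ∑ e ∈ range (b+1-1-(j+1)), (Ring.choose (-((j+1:ℕ):ℤ)-1) e) • G (j+1) (e+1) := by
      rw [Finset.sum_range_succ]
      rw [show b - (b+1) = 0 by omega]
      simp only [Finset.range_zero, Finset.sum_empty, add_zero]
      exact Finset.sum_congr rfl fun j hj => by
        rw [Finset.mem_range] at hj
        rw [show b+1-1-(j+1) = b-(j+1) by omega]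
    rw [hext]
    -- row 0 : ∑_{e<b} c 0 (e+1) • G 0 (e+1) = - ∑_{e<b+1-1-0} c 0 e • G 0 (e+1)
    have hrow0 : ∑ e ∈ range b, (Ring.choose (-((0:ℕ):ℤ)-1) (e+1)) • G 0 (e+1)
        = - ∑ e ∈ range (b+1-1-0), (Ring.choose (-((0:ℕ):ℤ)-1) e) • G 0 (e+1) := by
      rw [show b+1-1-0 = b by omega, ← Finset.sum_neg_distrib]
      exact Finset.sum_congr rfl fun e _ => by
        rw [show (-((0:ℕ):ℤ)-1) = (-1:ℤ) by norm_num, choose_neg_one_succ, neg_smul]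
    rw [hrow0]
    have h00 : (Ring.choose (-((0:ℕ):ℤ)-1) 0) • G 0 0 = G 0 0 := by
      rw [Ring.choose_zero_right, one_smul]
    rw [h00]
    ring


lemma main (hd : IsDeriv d) (n : ℕ) (u : ℕ → R) (hun : u n = 0) (V : ℕ → ℕ → R)
    (hrecl : ∀ k < n, ∀ l, 1 ≤ l → l ≤ n → V (k+1) l = d (V k l) + V k (l-1) + u l * V k n) :
    ∀ a, a ≤ n → ∀ k, k + a ≤ n →
    V k (n - a) =
      (∑ j ∈ range (a+1), (Ring.choose (-(j:ℤ)-1) (a-j)) • d^[a-j] (V (k+j) n))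
      - ∑ j ∈ range a, ∑ e ∈ range (a-1-j),
          (Ring.choose (-(j:ℤ)-1) e) • d^[e] (V (k+j) n * u (n-a+1+j+e)) := by
  intro a
  induction a with
  | zero =>
      intro _ k hk
      simp
  | succ a ih =>
      intro ha k hk
      have hrec := hrecl k (by omega) (n - a) (by omega) (by omega)
      have key : V k (n - (a+1)) = V (k+1) (n-a) - d (V k (n-a)) - u (n-a) * V k n := by
        rw [show n - (a+1) = n - a - 1 by omega] at *
        rw [hrec]; ring
      rw [key, ih (by omega) (k+1) (by omega), ih (by omega) k (by omega),
        d_sub hd, d_sum hd, d_sum hd]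
      have hA : ∑ j ∈ range (a+1+1), (Ring.choose (-(j:ℤ)-1) (a+1-j)) • d^[a+1-j] (V (k+j) n)
          = (∑ j ∈ range (a+1), (Ring.choose (-(j:ℤ)-1) (a-j)) • d^[a-j] (V ((k+1)+j) n))
            - ∑ j ∈ range (a+1), d ((Ring.choose (-(j:ℤ)-1) (a-j)) • d^[a-j] (V (k+j) n)) := by
        rw [claim1 a (fun j => d^[a+1-j] (V (k+j) n))]
        congr 1
        · exact Finset.sum_congr rfl fun j hj => by
            rw [Finset.mem_range] at hj
            rw [show (k+1)+j = k+(j+1) by omega, show a-j = a+1-(j+1) by omega]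
        · exact Finset.sum_congr rfl fun j hj => by
            rw [Finset.mem_range] at hj
            rw [d_zsmul hd,
              show d (d^[a-j] (V (k+j) n)) = d^[(a-j)+1] (V (k+j) n) from
                (Function.iterate_succ_apply' d _ _).symm,
              show (a-j)+1 = a+1-j by omega]
      have hB : ∑ j ∈ range (a+1), ∑ e ∈ range (a+1-1-j),
            (Ring.choose (-(j:ℤ)-1) e) • d^[e] (V (k+j) n * u (n-(a+1)+1+j+e))
          = (∑ j ∈ range a, ∑ e ∈ range (a-1-j),
              (Ring.choose (-(j:ℤ)-1) e) • d^[e] (V ((k+1)+j) n * u (n-a+1+j+e)))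
            - (∑ j ∈ range a, d (∑ e ∈ range (a-1-j),
                (Ring.choose (-(j:ℤ)-1) e) • d^[e] (V (k+j) n * u (n-a+1+j+e))))
            + u (n-a) * V k n := by
        have h0 : ∑ j ∈ range (a+1), ∑ e ∈ range (a+1-1-j),
              (Ring.choose (-(j:ℤ)-1) e) • d^[e] (V (k+j) n * u (n-(a+1)+1+j+e))
            = ∑ j ∈ range (a+1), ∑ e ∈ range (a-j),
              (Ring.choose (-(j:ℤ)-1) e) • d^[e] (V (k+j) n * u (n-(a+1)+1+j+e)) := by
          exact Finset.sum_congr rfl fun j hj => by rw [show a+1-1-j = a-j by omega]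
        rw [h0, claim2 a (fun j e => d^[e] (V (k+j) n * u (n-(a+1)+1+j+e)))]
        congr 1
        · congr 1
          · exact Finset.sum_congr rfl fun j hj => by
              rw [Finset.mem_range] at hj
              exact Finset.sum_congr rfl fun e he => by
                rw [show (k+1)+j = k+(j+1) by omega, show n-a+1+j+e = n-(a+1)+1+(j+1)+e by omega]
          · exact Finset.sum_congr rfl fun j hj => by
              rw [Finset.mem_range] at hj
              rw [d_sum hd]
              exact Finset.sum_congr rfl fun e he => by
                rw [Finset.mem_range] at he
                rw [d_zsmul hd,
                  show d (d^[e] (V (k+j) n * u (n-a+1+j+e))) = d^[e+1] (V (k+j) n * u (n-a+1+j+e)) from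
                    (Function.iterate_succ_apply' d _ _).symm,
                  show n-a+1+j+e = n-(a+1)+1+j+(e+1) by omega]
        · rcases Nat.eq_zero_or_pos a with rfl | hpos
          · rw [if_neg (by omega)]
            rw [show n - 0 = n by omega, hun, zero_mul]
          · rw [if_pos hpos]
            simp only [Nat.add_zero, Function.iterate_zero, id_eq]
            rw [show n-(a+1)+1 = n-a by omega, mul_comm]
      rw [hA, hB]
      ring


lemma pmul_tt (hd : IsDeriv d) (a b : R) (i q m : ℤ) :
    pmul d (term a i) (term b q) m =
      if 0 ≤ q + i - m then
        (Ring.choose i ((q+i-m).toNat) : ℤ) • (a * d^[(q+i-m).toNat] b) else 0 := by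
  have hzero : ∀ (p : ℤ × ℕ), (p.1 ≠ i ∨ ¬ (m - p.1 + (p.2:ℤ) = q)) →
      (Ring.choose p.1 p.2 : ℤ) • (term a i p.1 * d^[p.2] (term b q (m - p.1 + (p.2:ℤ)))) = 0 := by
    rintro ⟨i', k⟩ (hi | hq)
    · simp only [term] at hi ⊢
      rw [if_neg hi, zero_mul, smul_zero]
    · simp only [term] at hq ⊢
      rw [if_neg hq, iter_d_zero hd, mul_zero, smul_zero]
  unfold pmul
  split_ifs with h
  · rw [finsum_eq_single _ ((i, (q+i-m).toNat) : ℤ × ℕ)]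
    · simp only [term]
      rw [if_pos trivial, if_pos (show m - i + (((q+i-m).toNat : ℕ) : ℤ) = q by omega)]
    · rintro ⟨i', k⟩ hne
      apply hzero
      by_cases hi : i' = i
      · subst hi
        right
        intro hc
        exact hne (by simp only [Prod.mk.injEq]; exact ⟨trivial, by omega⟩)
      · left; exact hi
  · apply finsum_eq_zero_of_forall_eq_zero
    rintro ⟨i', k⟩
    apply hzero
    by_cases hi : i' = i
    · subst hi
      right
      intro hc
      omega
    · left; exact hi


lemma sum_range_hit (N : ℕ) (c : ℤ) (hc : c < N) (g : ℕ → R) :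
    ∑ k ∈ range N, (if (k:ℤ) = c then g k else 0) = if 0 ≤ c then g c.toNat else 0 := by
  split_ifs with h
  · rw [Finset.sum_eq_single c.toNat]
    · rw [if_pos (by omega)]
    · intro k _ hk
      rw [if_neg (by omega)]
    · intro hmem
      exact absurd (Finset.mem_range.mpr (by omega)) hmem
  · apply Finset.sum_eq_zero
    intro k _
    rw [if_neg (by omega)]

end GDAux

open GD in
/-- Proposition 5.3 i: with `L = ∂^{n+1} - ∑_{j<n} u_j ∂^j`,
`V = φ(v)` the matrix lifting determined by `V^j_n = v_j`, the recursion (5.9) and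
the trace-zero condition, `X = -∑_{j≤n} ∂^{-j-1} V^j_n` and
`E = -∑_{j≤n} V^0_j ∂^j`, one has `E = (XL)₊`. -/
theorem gd_E_eq_XL_plus {R : Type} [CommRing R] (d : R → R) (hd : GD.IsDeriv d)
    (n : ℕ) (hn : 0 < n) (lam : R) (hlam : d lam = 0)
    (u : ℕ → R) (hun : u n = 0) (v : ℕ → R)
    (V : ℕ → ℕ → R)
    (hrec0 : ∀ k < n, V (k + 1) 0 = d (V k 0) + V k n * (u 0 + lam))
    (hrecl : ∀ k < n, ∀ l, 1 ≤ l → l ≤ n →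
      V (k + 1) l = d (V k l) + V k (l - 1) + u l * V k n)
    (hvn : ∀ j < n, V j n = v j)
    (htr : ∑ k ∈ Finset.range (n + 1), V k k = 0)
    (L X E : PDO R)
    (hL : L = term 1 ((n : ℤ) + 1) - ∑ j ∈ Finset.range n, term (u j) (j : ℤ))
    (hX : X = - ∑ j ∈ Finset.range (n + 1),
            pmul d (term 1 (-(j : ℤ) - 1)) (term (V j n) 0))
    (hE : E = - ∑ j ∈ Finset.range (n + 1), term (V 0 j) (j : ℤ)) :
    E = GD.plus (pmul d X L) := by
  classical
  have hd' : GDAux.IsDeriv d := hd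
  funext m
  have hXc : ∀ i : ℤ, X i = - ∑ j ∈ Finset.range (n+1),
      (if 0 ≤ -(j:ℤ)-1-i then
        (Ring.choose (-(j:ℤ)-1) ((-(j:ℤ)-1-i).toNat) : ℤ) • (d^[(-(j:ℤ)-1-i).toNat] (V j n))
      else 0) := by
    intro i
    rw [hX]
    simp only [Pi.neg_apply, Finset.sum_apply]
    congr 1
    refine Finset.sum_congr rfl fun j hj => ?_
    rw [GDAux.pmul_tt hd' 1 (V j n) (-(j:ℤ)-1) 0 i,
      show (0 : ℤ) + (-(j:ℤ)-1) - i = -(j:ℤ)-1-i by ring]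
    split_ifs with hcond
    · rw [one_mul]
    · rfl
  have hX0 : ∀ i : ℤ, 0 ≤ i → X i = 0 := by
    intro i hi
    rw [hXc i]
    rw [Finset.sum_eq_zero fun j hj => by rw [if_neg (by omega)], neg_zero]
  have hLc : ∀ q : ℤ, L q = (if q = (n:ℤ)+1 then 1 else 0)
      - ∑ l ∈ Finset.range n, (if q = (l:ℤ) then u l else 0) := by
    intro q
    rw [hL]
    simp only [Pi.sub_apply, Finset.sum_apply, term]
  have hLhigh : ∀ q : ℤ, (n:ℤ)+1 < q → L q = 0 := by
    intro q hq
    rw [hLc q, if_neg (by omega),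
      Finset.sum_eq_zero fun l hl => by
        rw [Finset.mem_range] at hl
        rw [if_neg (by omega)], sub_zero]
  have hEc : E m = - ∑ j ∈ Finset.range (n+1), (if m = (j:ℤ) then V 0 j else 0) := by
    rw [hE]
    simp only [Pi.neg_apply, Finset.sum_apply, term]
  by_cases hm : 0 ≤ m
  case neg =>
    -- m < 0 : both sides are 0
    rw [hEc, GD.plus, if_neg hm,
      Finset.sum_eq_zero fun j hj => by rw [if_neg (by omega)], neg_zero]
  case pos =>
  obtain ⟨M, rfl⟩ : ∃ M : ℕ, m = (M : ℤ) := ⟨m.toNat, by omega⟩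
  rw [GD.plus, if_pos hm]
  -- Step A : express the product coefficient as a finite double sum
  have hsup : pmul d X L (M:ℤ) = ∑ r ∈ Finset.range (n+1), ∑ k ∈ Finset.range (n+1),
      (Ring.choose (-1-(r:ℤ)) k : ℤ) •
        (X (-1-(r:ℤ)) * d^[k] (L ((M:ℤ) - (-1-(r:ℤ)) + (k:ℤ)))) := by
    show (∑ᶠ p : ℤ × ℕ, (Ring.choose p.1 p.2 : ℤ) •
        (X p.1 * d^[p.2] (L ((M:ℤ) - p.1 + (p.2 : ℤ))))) = _
    rw [finsum_eq_finset_sum_of_support_subset _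
      (s := ((Finset.range (n+1)).image (fun r : ℕ => (-1-(r:ℤ)))) ×ˢ Finset.range (n+1)) ?_]
    · rw [Finset.sum_product, Finset.sum_image (fun x _ y _ h => by omega)]
    · rintro ⟨i, k⟩ hp
      simp only [Function.mem_support, ne_eq] at hp
      by_contra hns
      apply hp
      simp only [Finset.coe_product, Set.mem_prod, Finset.mem_coe, Finset.mem_image,
        Finset.mem_range, not_and_or, not_exists] at hns
      by_cases hi : 0 ≤ i
      · rw [hX0 i hi, zero_mul, smul_zero]
      · rcases hns with h1 | h2
        · have hlow : i < -(n:ℤ)-1 := by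
            by_contra hge
            push_neg at hge
            rcases h1 ((-1-i).toNat) with hc | hc
            · exact hc (by omega)
            · exact hc (by omega)
          rw [hLhigh _ (by omega), GDAux.iter_d_zero hd', mul_zero, smul_zero]
        · rw [hLhigh _ (by push_neg at h2; omega), GDAux.iter_d_zero hd', mul_zero, smul_zero]
  -- Step B : split off the ∂^{n+1} part of L
  have hsplit : pmul d X L (M:ℤ) =
      (∑ r ∈ Finset.range (n+1), ∑ k ∈ Finset.range (n+1),
        (Ring.choose (-1-(r:ℤ)) k : ℤ) •
          (X (-1-(r:ℤ)) * d^[k] (if (M:ℤ) - (-1-(r:ℤ)) + (k:ℤ) = (n:ℤ)+1 then (1:R) else 0)))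
      - ∑ r ∈ Finset.range (n+1), ∑ k ∈ Finset.range (n+1),
        (Ring.choose (-1-(r:ℤ)) k : ℤ) •
          (X (-1-(r:ℤ)) * d^[k] (∑ l ∈ Finset.range n,
            (if (M:ℤ) - (-1-(r:ℤ)) + (k:ℤ) = (l:ℤ) then u l else 0))) := by
    rw [hsup, ← Finset.sum_sub_distrib]
    refine Finset.sum_congr rfl fun r _ => ?_
    rw [← Finset.sum_sub_distrib]
    refine Finset.sum_congr rfl fun k _ => ?_
    rw [hLc, GDAux.iter_d_sub hd', mul_sub, smul_sub]
  -- Step C : the ∂^{n+1} part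
  have hT1 : ∑ r ∈ Finset.range (n+1), ∑ k ∈ Finset.range (n+1),
      (Ring.choose (-1-(r:ℤ)) k : ℤ) •
        (X (-1-(r:ℤ)) * d^[k] (if (M:ℤ) - (-1-(r:ℤ)) + (k:ℤ) = (n:ℤ)+1 then (1:R) else 0))
      = ∑ r ∈ Finset.range (n+1),
          (if (M:ℤ)+1+(r:ℤ) = (n:ℤ)+1 then X (-1-(r:ℤ)) else 0) := by
    refine Finset.sum_congr rfl fun r _ => ?_
    rw [Finset.sum_eq_single 0]
    · rw [Ring.choose_zero_right, one_smul,
        show (M:ℤ) - (-1-(r:ℤ)) + ((0:ℕ):ℤ) = (M:ℤ)+1+(r:ℤ) by push_cast; ring,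
        Function.iterate_zero, id_eq, mul_ite, mul_one, mul_zero]
    · intro k _ hk
      rw [apply_ite (d^[k]), GDAux.iter_d_one hd' k hk, GDAux.iter_d_zero hd',
        ite_self, mul_zero, smul_zero]
    · intro h0
      exact absurd (Finset.mem_range.mpr (by omega)) h0
  -- Step D1 : collapse the k-sum in the u-part
  have hT2a : ∀ r ∈ Finset.range (n+1), ∑ k ∈ Finset.range (n+1),
      (Ring.choose (-1-(r:ℤ)) k : ℤ) •
        (X (-1-(r:ℤ)) * d^[k] (∑ l ∈ Finset.range n,
          (if (M:ℤ) - (-1-(r:ℤ)) + (k:ℤ) = (l:ℤ) then u l else 0)))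
      = ∑ l ∈ Finset.range n, (if 0 ≤ (l:ℤ)-(M:ℤ)-1-(r:ℤ) then
          (Ring.choose (-1-(r:ℤ)) (((l:ℤ)-(M:ℤ)-1-(r:ℤ)).toNat) : ℤ) •
            (X (-1-(r:ℤ)) * d^[((l:ℤ)-(M:ℤ)-1-(r:ℤ)).toNat] (u l)) else 0) := by
    intro r _
    have h1 : ∀ k ∈ Finset.range (n+1), (Ring.choose (-1-(r:ℤ)) k : ℤ) •
        (X (-1-(r:ℤ)) * d^[k] (∑ l ∈ Finset.range n,
          (if (M:ℤ) - (-1-(r:ℤ)) + (k:ℤ) = (l:ℤ) then u l else 0)))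
        = ∑ l ∈ Finset.range n, (if (k:ℤ) = (l:ℤ)-(M:ℤ)-1-(r:ℤ) then
            (Ring.choose (-1-(r:ℤ)) k : ℤ) • (X (-1-(r:ℤ)) * d^[k] (u l)) else 0) := by
      intro k _
      rw [GDAux.iter_d_sum hd', Finset.mul_sum, Finset.smul_sum]
      refine Finset.sum_congr rfl fun l _ => ?_
      rw [apply_ite (d^[k]), GDAux.iter_d_zero hd']
      by_cases hc : (M:ℤ) - (-1-(r:ℤ)) + (k:ℤ) = (l:ℤ)
      · rw [if_pos hc, if_pos (by omega)]
      · rw [if_neg hc, if_neg (by omega), mul_zero, smul_zero]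
    rw [Finset.sum_congr rfl h1, Finset.sum_comm]
    refine Finset.sum_congr rfl fun l hl => ?_
    rw [Finset.mem_range] at hl
    exact GDAux.sum_range_hit (n+1) ((l:ℤ)-(M:ℤ)-1-(r:ℤ)) (by omega) _
  -- Step D2 : substitute the expression for X
  have hT2b : ∀ r ∈ Finset.range (n+1), ∀ l ∈ Finset.range n,
      (if 0 ≤ (l:ℤ)-(M:ℤ)-1-(r:ℤ) then
        (Ring.choose (-1-(r:ℤ)) (((l:ℤ)-(M:ℤ)-1-(r:ℤ)).toNat) : ℤ) •
          (X (-1-(r:ℤ)) * d^[((l:ℤ)-(M:ℤ)-1-(r:ℤ)).toNat] (u l)) else 0)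
      = - ∑ j ∈ Finset.range (n+1), (if j ≤ r ∧ M+1+r ≤ l then ((Ring.choose (-1-(r:ℤ)) (l-(M+1+r)) : ℤ) * (Ring.choose (-(j:ℤ)-1) (r-j) : ℤ)) • (d^[r-j] (V j n) * d^[l-(M+1+r)] (u l)) else 0) := by
    intro r _ l _
    by_cases hc : 0 ≤ (l:ℤ)-(M:ℤ)-1-(r:ℤ)
    · rw [if_pos hc, hXc (-1-(r:ℤ)), neg_mul, smul_neg, Finset.sum_mul, Finset.smul_sum]
      congr 1
      refine Finset.sum_congr rfl fun j _ => ?_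
      by_cases hj : j ≤ r
      · rw [if_pos (show (0:ℤ) ≤ -(j:ℤ)-1-(-1-(r:ℤ)) by omega), if_pos ⟨hj, by omega⟩,
          show ((-(j:ℤ)-1-(-1-(r:ℤ))).toNat) = r - j by omega,
          show (((l:ℤ)-(M:ℤ)-1-(r:ℤ)).toNat) = l-(M+1+r) by omega,
          smul_mul_assoc, smul_smul]
      · rw [if_neg (show ¬ (0:ℤ) ≤ -(j:ℤ)-1-(-1-(r:ℤ)) by omega), if_neg (by omega),
          zero_mul, smul_zero]
    · rw [if_neg hc]
      symm
      rw [Finset.sum_eq_zero fun j _ => by rw [if_neg (by omega)], neg_zero]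
  -- Step D3 : reorganize the triple sum and collapse the r-sum
  have hrow : ∀ j ∈ Finset.range (n+1), ∀ l ∈ Finset.range n,
      ∑ r ∈ Finset.range (n+1), (if j ≤ r ∧ M+1+r ≤ l then ((Ring.choose (-1-(r:ℤ)) (l-(M+1+r)) : ℤ) * (Ring.choose (-(j:ℤ)-1) (r-j) : ℤ)) • (d^[r-j] (V j n) * d^[l-(M+1+r)] (u l)) else 0)
      = (if M+1+j ≤ l then
          (Ring.choose (-(j:ℤ)-1) (l-(M+1+j)) : ℤ) • d^[l-(M+1+j)] (V j n * u l) else 0) := by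
    intro j hj l hl
    rw [Finset.mem_range] at hj hl
    by_cases hcl : M+1+j ≤ l
    · rw [if_pos hcl]
      rw [show (∑ r ∈ Finset.range (n+1), (if j ≤ r ∧ M+1+r ≤ l then ((Ring.choose (-1-(r:ℤ)) (l-(M+1+r)) : ℤ) * (Ring.choose (-(j:ℤ)-1) (r-j) : ℤ)) • (d^[r-j] (V j n) * d^[l-(M+1+r)] (u l)) else 0))
          = ∑ r ∈ Finset.Ico j (j + (l-(M+1+j)) + 1), (if j ≤ r ∧ M+1+r ≤ l then ((Ring.choose (-1-(r:ℤ)) (l-(M+1+r)) : ℤ) * (Ring.choose (-(j:ℤ)-1) (r-j) : ℤ)) • (d^[r-j] (V j n) * d^[l-(M+1+r)] (u l)) else 0)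
          from (Finset.sum_subset
            (fun x hx => by rw [Finset.mem_Ico] at hx; exact Finset.mem_range.mpr (by omega))
            (fun x hx hnx => by
              rw [Finset.mem_Ico] at hnx
              rw [if_neg (by omega)])).symm]
      rw [Finset.sum_Ico_eq_sum_range,
        show j + (l-(M+1+j)) + 1 - j = (l-(M+1+j)) + 1 by omega]
      have hterm : ∀ s ∈ Finset.range ((l-(M+1+j))+1),
          (if j ≤ (j+s) ∧ M+1+(j+s) ≤ l then ((Ring.choose (-1-(((j+s) : ℕ):ℤ)) (l-(M+1+(j+s))) : ℤ) * (Ring.choose (-(j:ℤ)-1) ((j+s)-j) : ℤ)) • (d^[(j+s)-j] (V j n) * d^[l-(M+1+(j+s))] (u l)) else 0)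
          = (Ring.choose (-(j:ℤ)-1) (l-(M+1+j)) : ℤ) •
              (((l-(M+1+j)).choose s) • (d^[s] (V j n) * d^[(l-(M+1+j))-s] (u l))) := by
        intro s hs
        rw [Finset.mem_range] at hs
        rw [if_pos ⟨by omega, by omega⟩,
          show (j+s)-j = s by omega,
          show l-(M+1+(j+s)) = (l-(M+1+j))-s by omega,
          show (-1-((j+s:ℕ):ℤ)) = -((j+s:ℕ):ℤ)-1 by ring,
          mul_comm (Ring.choose (-((j+s:ℕ):ℤ)-1) ((l-(M+1+j))-s) : ℤ) _,
          GDAux.tri j s (l-(M+1+j)) (by omega),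
          mul_comm ((((l-(M+1+j)).choose s) : ℤ)) _, mul_smul,
          Nat.cast_smul_eq_nsmul]
      rw [Finset.sum_congr rfl hterm, ← Finset.smul_sum, ← GDAux.leibniz hd']
    · rw [if_neg hcl]
      exact Finset.sum_eq_zero fun r _ => by rw [if_neg (by omega)]
  have hT2 : ∑ r ∈ Finset.range (n+1), ∑ k ∈ Finset.range (n+1),
      (Ring.choose (-1-(r:ℤ)) k : ℤ) •
        (X (-1-(r:ℤ)) * d^[k] (∑ l ∈ Finset.range n,
          (if (M:ℤ) - (-1-(r:ℤ)) + (k:ℤ) = (l:ℤ) then u l else 0)))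
      = - (∑ j ∈ Finset.range (n+1), ∑ l ∈ Finset.range n, (if M+1+j ≤ l then (Ring.choose (-(j:ℤ)-1) (l-(M+1+j)) : ℤ) • d^[l-(M+1+j)] (V j n * u l) else 0)) := by
    rw [Finset.sum_congr rfl hT2a,
      Finset.sum_congr rfl (fun r hr => Finset.sum_congr rfl (fun l hl => hT2b r hr l hl)),
      Finset.sum_congr rfl (fun r _ => Finset.sum_neg_distrib _),
      Finset.sum_neg_distrib]
    congr 1
    calc ∑ r ∈ Finset.range (n+1), ∑ l ∈ Finset.range n, ∑ j ∈ Finset.range (n+1), (if j ≤ r ∧ M+1+r ≤ l then ((Ring.choose (-1-(r:ℤ)) (l-(M+1+r)) : ℤ) * (Ring.choose (-(j:ℤ)-1) (r-j) : ℤ)) • (d^[r-j] (V j n) * d^[l-(M+1+r)] (u l)) else 0)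
        = ∑ r ∈ Finset.range (n+1), ∑ j ∈ Finset.range (n+1), ∑ l ∈ Finset.range n, (if j ≤ r ∧ M+1+r ≤ l then ((Ring.choose (-1-(r:ℤ)) (l-(M+1+r)) : ℤ) * (Ring.choose (-(j:ℤ)-1) (r-j) : ℤ)) • (d^[r-j] (V j n) * d^[l-(M+1+r)] (u l)) else 0) := Finset.sum_congr rfl fun r _ => Finset.sum_comm
      _ = ∑ j ∈ Finset.range (n+1), ∑ r ∈ Finset.range (n+1), ∑ l ∈ Finset.range n, (if j ≤ r ∧ M+1+r ≤ l then ((Ring.choose (-1-(r:ℤ)) (l-(M+1+r)) : ℤ) * (Ring.choose (-(j:ℤ)-1) (r-j) : ℤ)) • (d^[r-j] (V j n) * d^[l-(M+1+r)] (u l)) else 0) := Finset.sum_comm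
      _ = ∑ j ∈ Finset.range (n+1), ∑ l ∈ Finset.range n, ∑ r ∈ Finset.range (n+1), (if j ≤ r ∧ M+1+r ≤ l then ((Ring.choose (-1-(r:ℤ)) (l-(M+1+r)) : ℤ) * (Ring.choose (-(j:ℤ)-1) (r-j) : ℤ)) • (d^[r-j] (V j n) * d^[l-(M+1+r)] (u l)) else 0) := Finset.sum_congr rfl fun j _ => Finset.sum_comm
      _ = ∑ j ∈ Finset.range (n+1), ∑ l ∈ Finset.range n, (if M+1+j ≤ l then (Ring.choose (-(j:ℤ)-1) (l-(M+1+j)) : ℤ) • d^[l-(M+1+j)] (V j n * u l) else 0) := Finset.sum_congr rfl fun j hj => Finset.sum_congr rfl fun l hl => hrow j hj l hl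
  -- endgame
  rw [hEc, hsplit, hT1, hT2]
  by_cases hMn : M ≤ n
  case neg =>
    rw [Finset.sum_eq_zero (fun j hj => by
        rw [Finset.mem_range] at hj
        rw [if_neg (by omega)]),
      Finset.sum_eq_zero (fun r hr => by
        rw [Finset.mem_range] at hr
        rw [if_neg (by omega)]),
      Finset.sum_eq_zero (fun j hj => Finset.sum_eq_zero (fun l hl => by
        rw [Finset.mem_range] at hl
        rw [if_neg (by omega)]))]
    simp
  case pos =>
    have hT1v : ∑ r ∈ Finset.range (n+1),
        (if (M:ℤ)+1+(r:ℤ) = (n:ℤ)+1 then X (-1-(r:ℤ)) else 0) = X (-1-((n-M:ℕ):ℤ)) := by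
      rw [Finset.sum_eq_single (n-M)]
      · rw [if_pos (by push_cast; omega)]
      · intro r hr hne
        rw [Finset.mem_range] at hr
        rw [if_neg (by omega)]
      · intro habs
        exact absurd (Finset.mem_range.mpr (by omega)) habs
    have hXv : X (-1-((n-M:ℕ):ℤ))
        = - ∑ j ∈ Finset.range (n-M+1), (Ring.choose (-(j:ℤ)-1) (n-M-j) : ℤ) • d^[n-M-j] (V j n) := by
      rw [hXc]
      congr 1
      rw [show (∑ j ∈ Finset.range (n+1), (if 0 ≤ -(j:ℤ)-1-(-1-((n-M:ℕ):ℤ)) then (Ring.choose (-(j:ℤ)-1) ((-(j:ℤ)-1-(-1-((n-M:ℕ):ℤ))).toNat) : ℤ) • (d^[(-(j:ℤ)-1-(-1-((n-M:ℕ):ℤ))).toNat] (V j n)) else 0))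
          = ∑ j ∈ Finset.range (n-M+1), (if 0 ≤ -(j:ℤ)-1-(-1-((n-M:ℕ):ℤ)) then (Ring.choose (-(j:ℤ)-1) ((-(j:ℤ)-1-(-1-((n-M:ℕ):ℤ))).toNat) : ℤ) • (d^[(-(j:ℤ)-1-(-1-((n-M:ℕ):ℤ))).toNat] (V j n)) else 0)
        from (Finset.sum_subset
          (fun x hx => by rw [Finset.mem_range] at hx ⊢; omega)
          (fun x hx hnx => by
            rw [Finset.mem_range] at hx hnx
            rw [if_neg (by omega)])).symm]
      refine Finset.sum_congr rfl fun j hj => ?_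
      rw [Finset.mem_range] at hj
      rw [if_pos (by omega), show ((-(j:ℤ)-1-(-1-((n-M:ℕ):ℤ))).toNat) = n-M-j by omega]
    have hBv : (∑ j ∈ Finset.range (n+1), ∑ l ∈ Finset.range n, (if M+1+j ≤ l then (Ring.choose (-(j:ℤ)-1) (l-(M+1+j)) : ℤ) • d^[l-(M+1+j)] (V j n * u l) else 0))
        = ∑ j ∈ Finset.range (n-M), ∑ e ∈ Finset.range (n-M-1-j),
            (Ring.choose (-(j:ℤ)-1) e : ℤ) • d^[e] (V j n * u (M+1+j+e)) := by
      rw [show (∑ j ∈ Finset.range (n+1), ∑ l ∈ Finset.range n, (if M+1+j ≤ l then (Ring.choose (-(j:ℤ)-1) (l-(M+1+j)) : ℤ) • d^[l-(M+1+j)] (V j n * u l) else 0))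
          = ∑ j ∈ Finset.range (n-M), ∑ l ∈ Finset.range n, (if M+1+j ≤ l then (Ring.choose (-(j:ℤ)-1) (l-(M+1+j)) : ℤ) • d^[l-(M+1+j)] (V j n * u l) else 0)
        from (Finset.sum_subset
          (fun x hx => by rw [Finset.mem_range] at hx ⊢; omega)
          (fun x hx hnx => by
            rw [Finset.mem_range] at hx hnx
            exact Finset.sum_eq_zero fun l hl => by
              rw [Finset.mem_range] at hl
              rw [if_neg (by omega)])).symm]
      refine Finset.sum_congr rfl fun j hj => ?_
      rw [Finset.mem_range] at hj
      rw [show (∑ l ∈ Finset.range n, (if M+1+j ≤ l then (Ring.choose (-(j:ℤ)-1) (l-(M+1+j)) : ℤ) • d^[l-(M+1+j)] (V j n * u l) else 0))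
          = ∑ l ∈ Finset.Ico (M+1+j) n, (if M+1+j ≤ l then (Ring.choose (-(j:ℤ)-1) (l-(M+1+j)) : ℤ) • d^[l-(M+1+j)] (V j n * u l) else 0)
        from (Finset.sum_subset
          (fun x hx => by rw [Finset.mem_Ico] at hx; exact Finset.mem_range.mpr (by omega))
          (fun x hx hnx => by
            rw [Finset.mem_range] at hx
            rw [Finset.mem_Ico] at hnx
            rw [if_neg (by omega)])).symm,
        Finset.sum_Ico_eq_sum_range, show n - (M+1+j) = n-M-1-j by omega]
      refine Finset.sum_congr rfl fun e he => ?_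
      rw [Finset.mem_range] at he
      rw [if_pos (by omega), show M+1+j+e-(M+1+j) = e by omega]
    have hmain := GDAux.main hd' n u hun V hrecl (n-M) (by omega) 0 (by omega)
    rw [show n - (n-M) = M by omega] at hmain
    simp only [Nat.zero_add] at hmain
    have hEv : ∑ j ∈ Finset.range (n+1), (if (M:ℤ) = (j:ℤ) then V 0 j else 0) = V 0 M := by
      rw [Finset.sum_eq_single M]
      · rw [if_pos rfl]
      · intro j _ hne
        rw [if_neg (by omega)]
      · intro habs
        exact absurd (Finset.mem_range.mpr (by omega)) habs
    rw [hEv, hT1v, hXv, hBv, hmain]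
    ring
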